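/- arXiv:2505.19936 — 3 statements merged into one kernel-verified Lean document; each statement's English description precedes it below -/
import Mathlib

section
/- Under assumptions A1–A3, let F be Fréchet differentiable, x† an x*-minimum norm solution, and {X_m} a sequence of compact subsets with X_m ⊆ C ∩ D(F) whose union is dense in C ∩ D(F). Let parameter choice rules satisfy: α(δ) → 0, δ²/α(δ) → 0, m(δ) → ∞, and there exist x_{m(δ)} ∈ X_{m(δ)} with ‖x† − x_{m(δ)}‖²/α(δ) → 0 as δ → 0. Then for any sequence δ_k → 0, data y^{δ_k} with ‖y^{δ_k} − y‖ ≤ δ_k, and regularized solutions x_k ∈ argmin_{z ∈ X_{m(δ_k)}} ‖F(z) − y^{δ_k}‖² + α(δ_k)‖z − x*‖², the sequence {x_k} has a strongly convergent subsequence, and every limit of a convergent subsequence is an x*-minimum norm solution. -/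
open Filter Topology

/-- Weak convergence of a sequence in a real inner ℝ product space. -/
def WeaklyConv {H : Type*} [NormedAddCommGroup H] [InnerProductSpace ℝ H]
    (x : ℕ → H) (l : H) : Prop :=
  ∀ z : H, Tendsto (fun n => (inner ℝ (x n) z : ℝ)) atTop (nhds (inner ℝ l z))

/-- A set is weakly sequentially closed. -/
def WeaklySeqClosed {H : Type*} [NormedAddCommGroup H] [InnerProductSpace ℝ H]
    (C : Set H) : Prop :=
  ∀ (x : ℕ → H) (l : H), (∀ n, x n ∈ C) → WeaklyConv x l → l ∈ C

/-- An operator `F` with domain `D` is weakly closed: if `x n ⇀ l` and `F (x n) ⇀ w`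
then `l ∈ D` and `F l = w`. -/
def WeaklyClosedMap {X Y : Type*} [NormedAddCommGroup X] [InnerProductSpace ℝ X]
    [NormedAddCommGroup Y] [InnerProductSpace ℝ Y] (F : X → Y) (D : Set X) : Prop :=
  ∀ (x : ℕ → X) (l : X) (w : Y), (∀ n, x n ∈ D) → WeaklyConv x l →
    WeaklyConv (fun n => F (x n)) w → l ∈ D ∧ F l = w

/-- `u` is an `x*`-minimum norm solution of `F z = y` subject to `z ∈ C ∩ D`. -/
def MinNormSol {X Y : Type*} [NormedAddCommGroup X] [InnerProductSpace ℝ X]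
    [NormedAddCommGroup Y] [InnerProductSpace ℝ Y]
    (F : X → Y) (D C : Set X) (y : Y) (xs : X) (u : X) : Prop :=
  u ∈ C ∩ D ∧ F u = y ∧ ∀ z ∈ C ∩ D, F z = y → ‖u - xs‖ ≤ ‖z - xs‖

lemma exists_weaklyConv_subseq {X : Type*} [NormedAddCommGroup X] [InnerProductSpace ℝ X]
    [CompleteSpace X] (x : ℕ → X) (M : ℝ) (hM : ∀ k, ‖x k‖ ≤ M) :
    ∃ (ψ : ℕ → ℕ) (u : X), StrictMono ψ ∧ WeaklyConv (fun n => x (ψ n)) u := by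
  have hM0 : 0 ≤ M := le_trans (norm_nonneg _) (hM 0)
  -- diagonal extraction on the countable family of inner ℝ products with the x i
  set g : ℕ → (ℕ → ℝ) := fun k i => inner ℝ (x k) (x i) with hg
  have hgmem : ∀ k, g k ∈ Set.pi Set.univ (fun _ : ℕ => Set.Icc (-(M*M)) (M*M)) := by
    intro k i _
    have h := abs_real_inner_le_norm (x k) (x i)
    have h2 : ‖x k‖ * ‖x i‖ ≤ M * M :=
      mul_le_mul (hM k) (hM i) (norm_nonneg _) hM0
    have := h.trans h2
    exact abs_le.mp this
  obtain ⟨a, -, ψ, hψ, hconv⟩ :=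
    (isCompact_univ_pi (fun _ : ℕ => isCompact_Icc)).tendsto_subseq hgmem
  have hcoord : ∀ i, Tendsto (fun n => (inner ℝ (x (ψ n)) (x i) : ℝ)) atTop (nhds (a i)) := by
    intro i
    have := tendsto_pi_nhds.mp hconv i
    exact this
  -- set of vectors along which the subsequence converges weakly
  set S : Set X := {z : X | ∃ L : ℝ, Tendsto (fun n => (inner ℝ (x (ψ n)) z : ℝ)) atTop (nhds L)}
    with hS
  have hspan : (Submodule.span ℝ (Set.range x) : Set X) ⊆ S := by
    intro z hz
    refine Submodule.span_induction (p := fun z _ => z ∈ S) ?_ ?_ ?_ ?_ hz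
    · rintro _ ⟨i, rfl⟩; exact ⟨a i, hcoord i⟩
    · exact ⟨0, by simpa using tendsto_const_nhds⟩
    · rintro z w - - ⟨L1, h1⟩ ⟨L2, h2⟩
      refine ⟨L1 + L2, ?_⟩
      have := h1.add h2
      simpa only [← inner_add_right] using this
    · rintro c z - ⟨L, h⟩
      refine ⟨c * L, ?_⟩
      have := h.const_mul c
      simpa only [← real_inner_smul_right] using this
  have hclos : closure (Submodule.span ℝ (Set.range x) : Set X) ⊆ S := by
    intro z hz
    have hc : CauchySeq (fun n => (inner ℝ (x (ψ n)) z : ℝ)) := by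
      rw [Metric.cauchySeq_iff']
      intro ε hε
      obtain ⟨w, hw, hwz⟩ : ∃ w ∈ (Submodule.span ℝ (Set.range x) : Set X),
          ‖z - w‖ < ε / (4 * (M + 1)) := by
        have hpos : 0 < ε / (4 * (M + 1)) := by positivity
        obtain ⟨w, hw1, hw2⟩ := Metric.mem_closure_iff.mp hz _ hpos
        exact ⟨w, hw1, by simpa [dist_eq_norm] using hw2⟩
      obtain ⟨L, hL⟩ := hspan hw
      have hcw : CauchySeq (fun n => (inner ℝ (x (ψ n)) w : ℝ)) := hL.cauchySeq
      obtain ⟨N, hN⟩ := Metric.cauchySeq_iff'.mp hcw (ε/2) (by positivity)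
      refine ⟨N, fun n hn => ?_⟩
      set p : ℕ → ℝ := fun m => (inner ℝ (x (ψ m)) z : ℝ) with hp
      set q : ℕ → ℝ := fun m => (inner ℝ (x (ψ m)) w : ℝ) with hq
      have key : ∀ m, |p m - q m| ≤ M * (ε / (4 * (M + 1))) := by
        intro m
        have h0 : p m - q m = inner ℝ (x (ψ m)) (z - w) := by
          rw [hp, hq]; simp [inner_sub_right]
        rw [h0]
        calc |(inner ℝ (x (ψ m)) (z - w) : ℝ)| ≤ ‖x (ψ m)‖ * ‖z - w‖ := abs_real_inner_le_norm _ _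
          _ ≤ M * (ε / (4 * (M + 1))) :=
            mul_le_mul (hM _) hwz.le (norm_nonneg _) hM0
      have e2 : (M + 1) * (ε / (4 * (M + 1))) = ε / 4 := by
        field_simp
      have hMe : M * (ε / (4 * (M + 1))) ≤ ε / 4 :=
        (mul_le_mul_of_nonneg_right (by linarith : M ≤ M + 1) (by positivity)).trans_eq e2
      have tri : |p n - p N| ≤ |p n - q n| + |q n - q N| + |q N - p N| := by
        have t1 : |p n - p N| ≤ |p n - q N| + |q N - p N| := abs_sub_le _ _ _
        have t2 : |p n - q N| ≤ |p n - q n| + |q n - q N| := abs_sub_le _ _ _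
        linarith
      have hqq : |q n - q N| < ε / 2 := by
        have := hN n hn; rwa [Real.dist_eq] at this
      have hk1 := (key n).trans hMe
      have hk2 : |q N - p N| ≤ ε / 4 := by
        rw [abs_sub_comm]; exact (key N).trans hMe
      rw [Real.dist_eq]
      calc |p n - p N| ≤ |p n - q n| + |q n - q N| + |q N - p N| := tri
        _ < ε / 4 + ε / 2 + ε / 4 := by linarith
        _ = ε := by ring
    obtain ⟨L, hL⟩ := cauchySeq_tendsto_of_complete hc
    exact ⟨L, hL⟩
  -- full convergence via orthogonal projection
  set K := (Submodule.span ℝ (Set.range x)).topologicalClosure with hK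
  haveI : CompleteSpace K :=
    (Submodule.isClosed_topologicalClosure _).completeSpace_coe
  have hxK : ∀ k, x k ∈ K :=
    fun k => Submodule.le_topologicalClosure _ (Submodule.subset_span (Set.mem_range_self k))
  have hall : ∀ z : X, ∃ L : ℝ, Tendsto (fun n => (inner ℝ (x (ψ n)) z : ℝ)) atTop (nhds L) := by
    intro z
    have hPz : ((K.orthogonalProjectionOnto z : X)) ∈ S := by
      apply hclos
      have : ((K.orthogonalProjectionOnto z : X)) ∈ K := (K.orthogonalProjectionOnto z).2
      rwa [hK, ← Submodule.topologicalClosure_coe] at *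
    obtain ⟨L, hL⟩ := hPz
    refine ⟨L, ?_⟩
    have heq : ∀ n, (inner ℝ (x (ψ n)) z : ℝ) = inner ℝ (x (ψ n)) ((K.orthogonalProjectionOnto z : X)) := by
      intro n
      have horth : z - (K.orthogonalProjectionOnto z : X) ∈ Kᗮ :=
        K.sub_starProjection_mem_orthogonal z
      have := (Submodule.mem_orthogonal K _).mp horth (x (ψ n)) (hxK _)
      have h2 : (inner ℝ (x (ψ n)) (z - (K.orthogonalProjectionOnto z : X)) : ℝ) = 0 := this
      rw [inner_sub_right] at h2
      linarith
    simpa only [heq] using hL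
  choose L hL using hall
  have hadd : ∀ z w, L (z + w) = L z + L w := by
    intro z w
    refine tendsto_nhds_unique (hL (z + w)) ?_
    simpa [inner_add_right] using (hL z).add (hL w)
  have hsmul : ∀ (c : ℝ) z, L (c • z) = c * L z := by
    intro c z
    refine tendsto_nhds_unique (hL (c • z)) ?_
    simpa [real_inner_smul_right] using (hL z).const_mul c
  have hbound : ∀ z, |L z| ≤ M * ‖z‖ := by
    intro z
    refine le_of_tendsto (hL z).abs (Eventually.of_forall fun n => ?_)
    calc |(inner ℝ (x (ψ n)) z : ℝ)| ≤ ‖x (ψ n)‖ * ‖z‖ := abs_real_inner_le_norm _ _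
      _ ≤ M * ‖z‖ := mul_le_mul_of_nonneg_right (hM _) (norm_nonneg _)
  let Flin : X →ₗ[ℝ] ℝ :=
    { toFun := L, map_add' := hadd, map_smul' := hsmul }
  let Fcont : X →L[ℝ] ℝ := LinearMap.mkContinuous Flin M (fun z => by
    simpa [Flin, Real.norm_eq_abs] using hbound z)
  refine ⟨ψ, (InnerProductSpace.toDual ℝ X).symm Fcont, hψ, fun z => ?_⟩
  have : (inner ℝ ((InnerProductSpace.toDual ℝ X).symm Fcont) z : ℝ) = Fcont z :=
    InnerProductSpace.toDual_symm_apply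
  rw [this]
  exact hL z

lemma sq_to_zero {r : ℕ → ℝ} (h0 : ∀ k, 0 ≤ r k)
    (h : Tendsto (fun k => r k ^ 2) atTop (nhds 0)) : Tendsto r atTop (nhds 0) := by
  have h2 := (Real.continuous_sqrt.tendsto 0).comp h
  simp only [Function.comp_def] at h2
  have e : ∀ k, Real.sqrt (r k ^ 2) = r k := fun k => Real.sqrt_sq (h0 k)
  simpa [e] using h2

lemma le_of_sq_le_sq' {a b : ℝ} (hb : 0 ≤ b) (h : a ^ 2 ≤ b ^ 2) (ha : 0 ≤ a) : a ≤ b := by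
  nlinarith

/-- Convergence of Tikhonov regularization on a dense sequence of compact sets:
under the parameter choice rules, regularized solutions have a strongly convergent
subsequence and every limit of a convergent subsequence is an `x*`-minimum norm solution. -/
theorem tikhonov_compact_sets_convergence
    {X Y : Type*} [NormedAddCommGroup X] [InnerProductSpace ℝ X] [CompleteSpace X]
    [NormedAddCommGroup Y] [InnerProductSpace ℝ Y] [CompleteSpace Y]
    (F : X → Y) (D C : Set X) (y : Y) (xs : X)
    (hFc : ContinuousOn F D) (hF : WeaklyClosedMap F D) (hC : WeaklySeqClosed C)
    (Fd : X → X →L[ℝ] Y) (hFd : ∀ z ∈ D, HasFDerivWithinAt F (Fd z) D z)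
    (xdag : X) (hdag : MinNormSol F D C y xs xdag)
    (Xm : ℕ → Set X) (hXc : ∀ m, IsCompact (Xm m)) (hXsub : ∀ m, Xm m ⊆ C ∩ D)
    (hXdense : C ∩ D ⊆ closure (⋃ m, Xm m))
    (α : ℝ → ℝ) (hαpos : ∀ δ > (0:ℝ), 0 < α δ)
    (hα1 : Tendsto α (nhdsWithin 0 (Set.Ioi 0)) (nhds 0))
    (hα2 : Tendsto (fun δ => δ ^ 2 / α δ) (nhdsWithin 0 (Set.Ioi 0)) (nhds 0))
    (mft : ℝ → ℕ) (hm : Tendsto mft (nhdsWithin 0 (Set.Ioi 0)) atTop)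
    (xapx : ℝ → X) (hapx : ∀ δ > (0:ℝ), xapx δ ∈ Xm (mft δ))
    (hapx0 : Tendsto (fun δ => ‖xdag - xapx δ‖ ^ 2 / α δ) (nhdsWithin 0 (Set.Ioi 0)) (nhds 0)) :
    ∀ (δk : ℕ → ℝ), (∀ k, 0 < δk k) → Tendsto δk atTop (nhds 0) →
    ∀ (yd : ℕ → Y), (∀ k, ‖yd k - y‖ ≤ δk k) →
    ∀ (xk : ℕ → X),
      (∀ k, xk k ∈ Xm (mft (δk k)) ∧ ∀ z ∈ Xm (mft (δk k)),
        ‖F (xk k) - yd k‖ ^ 2 + α (δk k) * ‖xk k - xs‖ ^ 2 ≤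
          ‖F z - yd k‖ ^ 2 + α (δk k) * ‖z - xs‖ ^ 2) →
      (∃ (φ : ℕ → ℕ) (u : X), StrictMono φ ∧
          Tendsto (fun n => xk (φ n)) atTop (nhds u)) ∧
        ∀ (φ : ℕ → ℕ) (u : X), StrictMono φ →
          Tendsto (fun n => xk (φ n)) atTop (nhds u) → MinNormSol F D C y xs u := by
  intro δk hδpos hδ0 yd hyd xk hxk
  obtain ⟨⟨hdagC, hdagD⟩, hFdag, hmin⟩ := hdag
  have hδw : Tendsto δk atTop (nhdsWithin (0:ℝ) (Set.Ioi 0)) :=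
    tendsto_nhdsWithin_of_tendsto_nhds_of_eventually_within δk hδ0
      (Eventually.of_forall fun k => hδpos k)
  set αk : ℕ → ℝ := fun k => α (δk k) with hαkdef
  have hαkpos : ∀ k, 0 < αk k := fun k => hαpos _ (hδpos k)
  have hαk0 : Tendsto αk atTop (nhds 0) := hα1.comp hδw
  have hδ2α : Tendsto (fun k => δk k ^ 2 / αk k) atTop (nhds 0) := hα2.comp hδw
  set w : ℕ → X := fun k => xapx (δk k) with hwdef
  have hwX : ∀ k, w k ∈ Xm (mft (δk k)) := fun k => hapx _ (hδpos k)
  have hwCD : ∀ k, w k ∈ C ∩ D := fun k => hXsub _ (hwX k)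
  set e : ℕ → ℝ := fun k => ‖xdag - w k‖ ^ 2 / αk k with hedef
  have he0 : Tendsto e atTop (nhds 0) := hapx0.comp hδw
  have hwnorm2 : Tendsto (fun k => ‖xdag - w k‖ ^ 2) atTop (nhds 0) := by
    have heq : (fun k => ‖xdag - w k‖ ^ 2) = fun k => e k * αk k :=
      funext fun k => (div_mul_cancel₀ _ (hαkpos k).ne').symm
    rw [heq]
    simpa using he0.mul hαk0
  have hwn : Tendsto (fun k => ‖w k - xdag‖) atTop (nhds 0) := by
    have := sq_to_zero (fun k => norm_nonneg _) hwnorm2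
    simpa [norm_sub_rev] using this
  have hwdag : Tendsto w atTop (nhds xdag) := tendsto_iff_norm_sub_tendsto_zero.mpr hwn
  -- Fréchet-derivative based bound on the approximation residual
  have hwD : Tendsto w atTop (nhdsWithin xdag D) :=
    tendsto_nhdsWithin_of_tendsto_nhds_of_eventually_within w hwdag
      (Eventually.of_forall fun k => (hwCD k).2)
  set c : ℕ → ℝ := fun k => ‖F (w k) - y‖ with hcdef
  set Lc : ℝ := ‖Fd xdag‖ + 1 with hLcdef
  have hLc0 : 0 ≤ Lc := by rw [hLcdef]; positivity
  have hlo := ((hFd xdag hdagD).isLittleO.comp_tendsto hwD).def one_pos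
  have hcev : ∀ᶠ k in atTop, c k ≤ Lc * ‖w k - xdag‖ := by
    filter_upwards [hlo] with k hk
    simp only [Function.comp] at hk
    have hsplit : F (w k) - y =
        (F (w k) - F xdag - Fd xdag (w k - xdag)) + Fd xdag (w k - xdag) := by
      rw [hFdag]; abel
    calc c k = ‖(F (w k) - F xdag - Fd xdag (w k - xdag)) + Fd xdag (w k - xdag)‖ := by
          rw [hcdef]; simp only; rw [hsplit]
      _ ≤ ‖F (w k) - F xdag - Fd xdag (w k - xdag)‖ + ‖Fd xdag (w k - xdag)‖ := norm_add_le _ _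
      _ ≤ 1 * ‖w k - xdag‖ + ‖Fd xdag‖ * ‖w k - xdag‖ :=
          add_le_add hk ((Fd xdag).le_opNorm _)
      _ = Lc * ‖w k - xdag‖ := by rw [hLcdef]; ring
  have hc0 : Tendsto c atTop (nhds 0) := by
    refine squeeze_zero' (Eventually.of_forall fun k => norm_nonneg _) hcev ?_
    simpa using hwn.const_mul Lc
  have hc2α : Tendsto (fun k => c k ^ 2 / αk k) atTop (nhds 0) := by
    have hnn : ∀ k, 0 ≤ c k ^ 2 / αk k := fun k =>
      div_nonneg (sq_nonneg _) (hαkpos k).le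
    refine squeeze_zero' (g := fun k => Lc ^ 2 * e k) (Eventually.of_forall hnn) ?_ ?_
    · filter_upwards [hcev] with k hk
      have h0 : 0 ≤ c k := norm_nonneg _
      have h1 : c k ^ 2 ≤ Lc ^ 2 * ‖xdag - w k‖ ^ 2 := by
        rw [norm_sub_rev xdag]
        nlinarith [norm_nonneg (w k - xdag)]
      calc c k ^ 2 / αk k ≤ (Lc ^ 2 * ‖xdag - w k‖ ^ 2) / αk k := by
            apply div_le_div_of_nonneg_right h1 (hαkpos k).le |>.trans_eq rfl
        _ = Lc ^ 2 * e k := by rw [hedef]; ring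
    · simpa using he0.const_mul (Lc ^ 2)
  -- key minimality inequality
  set B : ℕ → ℝ := fun k => ‖xk k - xs‖ ^ 2 with hBdef
  set A : ℕ → ℝ := fun k => ‖F (xk k) - yd k‖ ^ 2 with hAdef
  have hmink : ∀ k, A k + αk k * B k ≤ (c k + δk k) ^ 2 + αk k * ‖w k - xs‖ ^ 2 := by
    intro k
    have h1 := (hxk k).2 (w k) (hwX k)
    have h2 : ‖F (w k) - yd k‖ ≤ c k + δk k := by
      calc ‖F (w k) - yd k‖ = ‖(F (w k) - y) + (y - yd k)‖ := by
            congr 1; abel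
        _ ≤ ‖F (w k) - y‖ + ‖y - yd k‖ := norm_add_le _ _
        _ ≤ c k + δk k := add_le_add le_rfl (by rw [norm_sub_rev]; exact hyd k)
    have h3 : ‖F (w k) - yd k‖ ^ 2 ≤ (c k + δk k) ^ 2 := by
      have := norm_nonneg (F (w k) - yd k)
      nlinarith
    have h4 : A k + αk k * B k ≤ ‖F (w k) - yd k‖ ^ 2 + αk k * ‖w k - xs‖ ^ 2 := h1
    linarith
  set T : ℕ → ℝ := fun k => (c k + δk k) ^ 2 / αk k + ‖w k - xs‖ ^ 2 with hTdef
  have hkey : ∀ k, B k ≤ T k := by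
    intro k
    have h1 := hmink k
    have hA : 0 ≤ A k := by rw [hAdef]; positivity
    have hα := hαkpos k
    have hq : (c k + δk k) ^ 2 = (c k + δk k) ^ 2 / αk k * αk k :=
      (div_mul_cancel₀ _ hα.ne').symm
    rw [hTdef]
    nlinarith [h1, hA, hα, hq]
  have hwxs : Tendsto (fun k => ‖w k - xs‖ ^ 2) atTop (nhds (‖xdag - xs‖ ^ 2)) := by
    have hcont : Continuous fun v : X => ‖v - xs‖ ^ 2 :=
      ((continuous_id.sub continuous_const).norm).pow 2
    exact (hcont.tendsto xdag).comp hwdag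
  have hquot : Tendsto (fun k => (c k + δk k) ^ 2 / αk k) atTop (nhds 0) := by
    have hnn : ∀ k, 0 ≤ (c k + δk k) ^ 2 / αk k := fun k =>
      div_nonneg (sq_nonneg _) (hαkpos k).le
    refine squeeze_zero' (g := fun k => 2 * (c k ^ 2 / αk k) + 2 * (δk k ^ 2 / αk k))
      (Eventually.of_forall hnn) (Eventually.of_forall fun k => ?_) ?_
    · have h : (c k + δk k) ^ 2 ≤ 2 * c k ^ 2 + 2 * δk k ^ 2 := by nlinarith [sq_nonneg (c k - δk k)]
      calc (c k + δk k) ^ 2 / αk k ≤ (2 * c k ^ 2 + 2 * δk k ^ 2) / αk k :=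
            div_le_div_of_nonneg_right h (hαkpos k).le |>.trans_eq rfl
        _ = 2 * (c k ^ 2 / αk k) + 2 * (δk k ^ 2 / αk k) := by ring
    · have := (hc2α.const_mul 2).add (hδ2α.const_mul 2)
      simpa using this
  have hT : Tendsto T atTop (nhds (‖xdag - xs‖ ^ 2)) := by
    have := hquot.add hwxs
    simpa [hTdef] using this
  -- residual goes to zero
  have hA0 : Tendsto A atTop (nhds 0) := by
    refine squeeze_zero' (g := fun k => T k * αk k)
      (Eventually.of_forall fun k => sq_nonneg _)
      (Eventually.of_forall fun k => ?_) ?_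
    · show A k ≤ T k * αk k
      have h1 := hmink k
      have hB0 : 0 ≤ B k := by rw [hBdef]; positivity
      have hα := hαkpos k
      have hTα : T k * αk k = (c k + δk k) ^ 2 + αk k * ‖w k - xs‖ ^ 2 := by
        rw [hTdef]
        field_simp
      rw [hTα]
      nlinarith [mul_nonneg (hαkpos k).le hB0]
    · simpa using hT.mul hαk0
  have hFyd : Tendsto (fun k => ‖F (xk k) - yd k‖) atTop (nhds 0) :=
    sq_to_zero (fun k => norm_nonneg _) hA0
  have hFxk : Tendsto (fun k => F (xk k)) atTop (nhds y) := by
    rw [tendsto_iff_norm_sub_tendsto_zero]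
    refine squeeze_zero (g := fun k => ‖F (xk k) - yd k‖ + δk k)
      (fun k => norm_nonneg _) (fun k => ?_) ?_
    · show ‖F (xk k) - y‖ ≤ ‖F (xk k) - yd k‖ + δk k
      calc ‖F (xk k) - y‖ = ‖(F (xk k) - yd k) + (yd k - y)‖ := by congr 1; abel
        _ ≤ ‖F (xk k) - yd k‖ + ‖yd k - y‖ := norm_add_le _ _
        _ ≤ ‖F (xk k) - yd k‖ + δk k := add_le_add le_rfl (hyd k)
    · simpa using hFyd.add hδ0
  -- boundedness of the sequence
  obtain ⟨MT, hMT⟩ := hT.bddAbove_range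
  have hMT0 : 0 ≤ MT := by
    refine le_trans ?_ (hMT ⟨0, rfl⟩)
    have : (0:ℝ) ≤ (c 0 + δk 0) ^ 2 / αk 0 + ‖w 0 - xs‖ ^ 2 :=
      add_nonneg (div_nonneg (by positivity) (hαkpos 0).le) (by positivity)
    simpa [hTdef] using this
  have hxkb : ∀ k, ‖xk k‖ ≤ Real.sqrt MT + ‖xs‖ := by
    intro k
    have h1 : B k ≤ MT := (hkey k).trans (hMT ⟨k, rfl⟩)
    have h2 : ‖xk k - xs‖ ≤ Real.sqrt MT := by
      have := Real.sqrt_le_sqrt h1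
      rwa [hBdef, Real.sqrt_sq (norm_nonneg _)] at this
    calc ‖xk k‖ = ‖(xk k - xs) + xs‖ := by congr 1; abel
      _ ≤ ‖xk k - xs‖ + ‖xs‖ := norm_add_le _ _
      _ ≤ Real.sqrt MT + ‖xs‖ := add_le_add h2 le_rfl
  -- weak limits along subsequences are solutions
  have hsol : ∀ (φ : ℕ → ℕ) (u : X), StrictMono φ → WeaklyConv (fun n => xk (φ n)) u →
      u ∈ C ∩ D ∧ F u = y := by
    intro φ u hφ hwk
    have hmem : ∀ n, xk (φ n) ∈ C ∩ D := fun n => hXsub _ (hxk (φ n)).1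
    have hCmem : u ∈ C := hC _ _ (fun n => (hmem n).1) hwk
    have hFweak : WeaklyConv (fun n => F (xk (φ n))) y := by
      intro z
      exact ((hFxk.comp hφ.tendsto_atTop).inner tendsto_const_nhds)
    obtain ⟨hDm, hFu⟩ := hF (fun n => xk (φ n)) u y (fun n => (hmem n).2) hwk hFweak
    exact ⟨⟨hCmem, hDm⟩, hFu⟩
  constructor
  · -- existence of a strongly convergent subsequence
    obtain ⟨ψ, u, hψ, hwk⟩ := exists_weaklyConv_subseq xk (Real.sqrt MT + ‖xs‖) hxkb
    obtain ⟨⟨huC, huD⟩, hFu⟩ := hsol ψ u hψ hwk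
    have hb2 : ‖xdag - xs‖ ^ 2 ≤ ‖u - xs‖ ^ 2 := by
      have h := hmin u ⟨huC, huD⟩ hFu
      have := norm_nonneg (xdag - xs)
      nlinarith
    have ht : Tendsto (fun n => (inner ℝ (xk (ψ n) - xs) (u - xs) : ℝ)) atTop
        (nhds (‖u - xs‖ ^ 2)) := by
      have h1 := hwk (u - xs)
      have h2 := h1.sub_const (inner ℝ xs (u - xs) : ℝ)
      have e1 : (fun n => (inner ℝ (xk (ψ n)) (u - xs) : ℝ) - inner ℝ xs (u - xs)) =
          fun n => (inner ℝ (xk (ψ n) - xs) (u - xs) : ℝ) :=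
        funext fun n => (inner_sub_left _ _ _).symm
      have e2 : (inner ℝ u (u - xs) : ℝ) - inner ℝ xs (u - xs) = ‖u - xs‖ ^ 2 := by
        rw [← inner_sub_left, real_inner_self_eq_norm_sq]
      rw [e1, e2] at h2
      exact h2
    have hsq : Tendsto (fun n => ‖xk (ψ n) - u‖ ^ 2) atTop (nhds 0) := by
      set r : ℕ → ℝ := fun n =>
        T (ψ n) - 2 * (inner ℝ (xk (ψ n) - xs) (u - xs) : ℝ) + ‖u - xs‖ ^ 2 with hrdef
      have hub : ∀ n, ‖xk (ψ n) - u‖ ^ 2 ≤ r n := by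
        intro n
        have hexp : ‖xk (ψ n) - u‖ ^ 2 =
            ‖xk (ψ n) - xs‖ ^ 2 - 2 * (inner ℝ (xk (ψ n) - xs) (u - xs) : ℝ) + ‖u - xs‖ ^ 2 := by
          have hid : xk (ψ n) - u = (xk (ψ n) - xs) - (u - xs) := by abel
          rw [hid, norm_sub_sq_real]
        have hk2 : ‖xk (ψ n) - xs‖ ^ 2 ≤ T (ψ n) := by
          have := hkey (ψ n)
          simpa only [hBdef] using this
        simp only [hrdef]
        rw [hexp]
        linarith
      have hrlim : Tendsto r atTop
          (nhds (‖xdag - xs‖ ^ 2 - 2 * ‖u - xs‖ ^ 2 + ‖u - xs‖ ^ 2)) := by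
        exact ((hT.comp hψ.tendsto_atTop).sub (ht.const_mul 2)).add_const _
      have hLneg : ‖xdag - xs‖ ^ 2 - 2 * ‖u - xs‖ ^ 2 + ‖u - xs‖ ^ 2 ≤ 0 := by linarith
      refine squeeze_zero (fun n => by positivity)
        (fun n => (hub n).trans (le_max_left _ 0)) ?_
      have := hrlim.max (tendsto_const_nhds : Tendsto (fun _ : ℕ => (0:ℝ)) atTop (nhds 0))
      rwa [max_eq_right hLneg] at this
    have hnorm := sq_to_zero (fun n => norm_nonneg _) hsq
    exact ⟨ψ, u, hψ, tendsto_iff_norm_sub_tendsto_zero.mpr hnorm⟩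
  · -- every strong limit is an x*-minimum norm solution
    intro φ u hφ hst
    have hwk : WeaklyConv (fun n => xk (φ n)) u := fun z => hst.inner tendsto_const_nhds
    obtain ⟨huCD, hFu⟩ := hsol φ u hφ hwk
    refine ⟨huCD, hFu, ?_⟩
    intro z hz hFz
    have hBlim : Tendsto (fun n => ‖xk (φ n) - xs‖ ^ 2) atTop (nhds (‖u - xs‖ ^ 2)) := by
      have hcont : Continuous fun v : X => ‖v - xs‖ ^ 2 :=
        ((continuous_id.sub continuous_const).norm).pow 2
      exact (hcont.tendsto u).comp hst
    have hle : ‖u - xs‖ ^ 2 ≤ ‖xdag - xs‖ ^ 2 :=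
      le_of_tendsto_of_tendsto' hBlim (hT.comp hφ.tendsto_atTop) (fun n => hkey (φ n))
    have h1 : ‖u - xs‖ ≤ ‖xdag - xs‖ :=
      le_of_sq_le_sq' (norm_nonneg _) hle (norm_nonneg _)
    exact h1.trans (hmin z hz hFz)
end

section
/- In the convergence theorem for Tikhonov regularization on compact sets, if the x*-minimum norm solution x† is unique, then the full family of regularized solutions x^δ_{m(δ),α(δ)} converges strongly to x† as δ → 0 (under the same parameter choice rules). -/
open Filter Topology

theorem weak_seq_compact {X : Type*} [NormedAddCommGroup X] [InnerProductSpace ℝ X]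
    [CompleteSpace X] (x : ℕ → X) (R : ℝ) (hR : ∀ n, ‖x n‖ ≤ R) :
    ∃ (φ : ℕ → ℕ) (l : X), StrictMono φ ∧ WeaklyConv (x ∘ φ) l := by
  have hR0 : 0 ≤ R := le_trans (norm_nonneg _) (hR 0)
  -- the closed span of the range
  set K : Submodule ℝ X := (Submodule.span ℝ (Set.range x)).topologicalClosure with hKdef
  have hxK : ∀ n, x n ∈ K :=
    fun n => Submodule.le_topologicalClosure _ (Submodule.subset_span (Set.mem_range_self n))
  have hKsep : TopologicalSpace.IsSeparable (K : Set X) := by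
    rw [hKdef, Submodule.topologicalClosure_coe]
    exact ((Set.countable_range x).isSeparable.span (R := ℝ)).closure
  obtain ⟨c, hcc, hcsub⟩ := hKsep
  obtain ⟨z, hz⟩ : ∃ z : ℕ → X, (insert (0:X) c) = Set.range z :=
    Set.Countable.exists_eq_range (hcc.insert 0) ⟨0, Set.mem_insert 0 c⟩
  have hKz : (K : Set X) ⊆ closure (Set.range z) := by
    rw [← hz]
    exact hcsub.trans (closure_mono (Set.subset_insert _ _))
  -- diagonal extraction via sequential compactness of a product of intervals
  have hcomp : IsCompact (Set.pi Set.univ (fun i : ℕ => Set.Icc (-(R * ‖z i‖)) (R * ‖z i‖))) :=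
    isCompact_univ_pi (fun i => isCompact_Icc)
  have hmem : ∀ n, (fun i => (inner ℝ (x n) (z i) : ℝ)) ∈
      Set.pi Set.univ (fun i : ℕ => Set.Icc (-(R * ‖z i‖)) (R * ‖z i‖)) := by
    intro n i _
    have h1 : |(inner ℝ (x n) (z i) : ℝ)| ≤ ‖x n‖ * ‖z i‖ := abs_real_inner_le_norm _ _
    have h2 : ‖x n‖ * ‖z i‖ ≤ R * ‖z i‖ :=
      mul_le_mul_of_nonneg_right (hR n) (norm_nonneg _)
    constructor <;> [linarith [neg_abs_le (inner ℝ (x n) (z i) : ℝ)]; linarith [le_abs_self (inner ℝ (x n) (z i) : ℝ)]]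
  obtain ⟨g, -, φ, hφ, hg⟩ := hcomp.isSeqCompact hmem
  have hgi : ∀ i, Tendsto (fun n => (inner ℝ (x (φ n)) (z i) : ℝ)) atTop (nhds (g i)) := by
    intro i
    have := tendsto_pi_nhds.1 hg i
    exact this
  -- every inner product along the subsequence converges
  have key : ∀ w : X, ∃ L : ℝ, Tendsto (fun n => (inner ℝ (x (φ n)) w : ℝ)) atTop (nhds L) := by
    intro w
    -- reduce to the projection onto K
    haveI : CompleteSpace K := by
      rw [hKdef]
      exact (Submodule.span ℝ (Set.range x)).isClosed_topologicalClosure.completeSpace_coe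
    set w0 : X := (K.orthogonalProjectionOnto w : X) with hw0
    have hw0K : w0 ∈ K := (K.orthogonalProjectionOnto w).2
    have hperp : w - w0 ∈ Kᗮ := Submodule.sub_starProjection_mem_orthogonal (K := K) w
    have hred : ∀ n, (inner ℝ (x n) w : ℝ) = inner ℝ (x n) w0 := by
      intro n
      have h0 : (inner ℝ (x n) (w - w0) : ℝ) = 0 :=
        real_inner_comm (x n) (w - w0) ▸ (Submodule.mem_orthogonal K (w - w0)).1 hperp (x n) (hxK n)
      have := inner_sub_right (𝕜 := ℝ) (x n) w w0
      linarith [inner_sub_right (𝕜 := ℝ) (x n) w w0]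
    have hCauchy : CauchySeq (fun n => (inner ℝ (x (φ n)) w0 : ℝ)) := by
      rw [Metric.cauchySeq_iff]
      intro ε hε
      have hεR : 0 < ε / (4 * (R + 1)) := by positivity
      obtain ⟨b, hbz, hbd⟩ := Metric.mem_closure_iff.1 (hKz hw0K) _ hεR
      obtain ⟨i, rfl⟩ := hbz
      have hci := (hgi i).cauchySeq
      rw [Metric.cauchySeq_iff] at hci
      obtain ⟨N, hN⟩ := hci (ε/2) (by linarith)
      refine ⟨N, fun m hm n hn => ?_⟩
      have h1 := hN m hm n hn
      rw [Real.dist_eq] at h1 ⊢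
      have hdm : ‖x (φ m) - x (φ n)‖ ≤ 2 * R := by
        calc ‖x (φ m) - x (φ n)‖ ≤ ‖x (φ m)‖ + ‖x (φ n)‖ := norm_sub_le _ _
          _ ≤ 2 * R := by linarith [hR (φ m), hR (φ n)]
      have e1 : (inner ℝ (x (φ m)) w0 : ℝ) - inner ℝ (x (φ n)) w0
          = ((inner ℝ (x (φ m)) (z i) : ℝ) - inner ℝ (x (φ n)) (z i))
            + (inner ℝ (x (φ m) - x (φ n)) (w0 - z i) : ℝ) := by
        simp only [inner_sub_left, inner_sub_right]; ring
      have e2 : |(inner ℝ (x (φ m) - x (φ n)) (w0 - z i) : ℝ)| ≤ (2*R) * (ε / (4*(R+1))) := by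
        calc |(inner ℝ (x (φ m) - x (φ n)) (w0 - z i) : ℝ)|
            ≤ ‖x (φ m) - x (φ n)‖ * ‖w0 - z i‖ := abs_real_inner_le_norm _ _
          _ ≤ (2*R) * (ε / (4*(R+1))) := by
              have : ‖w0 - z i‖ ≤ ε / (4*(R+1)) := by
                rw [← dist_eq_norm]; exact le_of_lt hbd
              exact mul_le_mul hdm this (norm_nonneg _) (by positivity)
      have e3 : (2*R) * (ε/(4*(R+1))) ≤ ε/2 := by
        have hq : ε/(4*(R+1)) * (4*(R+1)) = ε := div_mul_cancel₀ _ (by positivity)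
        nlinarith [mul_pos hε (show (0:ℝ) < 1 from one_pos), hεR.le]
      calc |(inner ℝ (x (φ m)) w0 : ℝ) - inner ℝ (x (φ n)) w0|
          ≤ |(inner ℝ (x (φ m)) (z i) : ℝ) - inner ℝ (x (φ n)) (z i)|
            + |(inner ℝ (x (φ m) - x (φ n)) (w0 - z i) : ℝ)| := by
            rw [e1]; exact abs_add_le _ _
        _ < ε := by linarith
    obtain ⟨L, hL⟩ := cauchySeq_tendsto_of_complete hCauchy
    exact ⟨L, hL.congr (fun n => (hred (φ n)).symm)⟩
  choose L hLspec using key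
  have hadd : ∀ w v, L (w + v) = L w + L v := fun w v =>
    tendsto_nhds_unique (hLspec (w+v)) (by simpa [inner_add_right] using (hLspec w).add (hLspec v))
  have hsmul : ∀ (a : ℝ) w, L (a • w) = a * L w := fun a w =>
    tendsto_nhds_unique (hLspec (a • w)) (by simpa [inner_smul_right] using (hLspec w).const_mul a)
  have hbound : ∀ w, |L w| ≤ R * ‖w‖ := fun w =>
    le_of_tendsto (hLspec w).abs (Filter.Eventually.of_forall fun n =>
      (abs_real_inner_le_norm _ _).trans (mul_le_mul_of_nonneg_right (hR _) (norm_nonneg _)))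
  let Lm : X →ₗ[ℝ] ℝ :=
    { toFun := L, map_add' := hadd, map_smul' := hsmul }
  let Lc : X →L[ℝ] ℝ := LinearMap.mkContinuous Lm R (fun w => by
    simpa [Lm, Real.norm_eq_abs] using hbound w)
  refine ⟨φ, (InnerProductSpace.toDual ℝ X).symm Lc, hφ, fun w => ?_⟩
  have : (inner ℝ ((InnerProductSpace.toDual ℝ X).symm Lc) w : ℝ) = L w :=
    InnerProductSpace.toDual_symm_apply
  rw [this]
  exact hLspec w

/-- strong convergence implies weak convergence -/
theorem strong_to_weak {H : Type*} [NormedAddCommGroup H] [InnerProductSpace ℝ H]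
    {v : ℕ → H} {w : H} (h : Tendsto (fun n => ‖v n - w‖) atTop (nhds 0)) :
    WeaklyConv v w := by
  intro z
  have h1 : Tendsto (fun n => (inner ℝ (v n) z : ℝ) - inner ℝ w z) atTop (nhds 0) := by
    refine squeeze_zero_norm (fun n => ?_) (by simpa using h.mul_const ‖z‖)
    calc ‖(inner ℝ (v n) z : ℝ) - inner ℝ w z‖ = ‖(inner ℝ (v n - w) z : ℝ)‖ := by
          rw [inner_sub_left]
      _ ≤ ‖v n - w‖ * ‖z‖ := by
          rw [Real.norm_eq_abs]; exact abs_real_inner_le_norm _ _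
  have := h1.add (tendsto_const_nhds (x := (inner ℝ w z : ℝ)))
  simpa using this

theorem norm_tendsto_of_sq {ι : Type*} {l : Filter ι} {f : ι → ℝ} (hf : ∀ n, 0 ≤ f n)
    (h : Tendsto (fun n => f n ^ 2) l (nhds 0)) : Tendsto f l (nhds 0) := by
  have hs : Tendsto (fun n => Real.sqrt (f n ^ 2)) l (nhds (Real.sqrt 0)) :=
    (Real.continuous_sqrt.tendsto 0).comp h
  simpa [Real.sqrt_zero] using hs.congr (fun n => Real.sqrt_sq (hf n))

theorem tikhonov_subseq
    {X Y : Type*} [NormedAddCommGroup X] [InnerProductSpace ℝ X] [CompleteSpace X]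
    [NormedAddCommGroup Y] [InnerProductSpace ℝ Y] [CompleteSpace Y]
    (F : X → Y) (D C : Set X) (y : Y) (xs : X)
    (hF : WeaklyClosedMap F D) (hC : WeaklySeqClosed C)
    (Fd : X → X →L[ℝ] Y) (hFd : ∀ z ∈ D, HasFDerivWithinAt F (Fd z) D z)
    (xdag : X) (hdag : MinNormSol F D C y xs xdag)
    (huniq : ∀ u, MinNormSol F D C y xs u → u = xdag)
    (Xm : ℕ → Set X) (hXsub : ∀ m, Xm m ⊆ C ∩ D)
    (α : ℝ → ℝ) (hαpos : ∀ δ > (0:ℝ), 0 < α δ)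
    (hα1 : Tendsto α (nhdsWithin 0 (Set.Ioi 0)) (nhds 0))
    (hα2 : Tendsto (fun δ => δ ^ 2 / α δ) (nhdsWithin 0 (Set.Ioi 0)) (nhds 0))
    (mft : ℝ → ℕ)
    (xapx : ℝ → X) (hapx : ∀ δ > (0:ℝ), xapx δ ∈ Xm (mft δ))
    (hapx0 : Tendsto (fun δ => ‖xdag - xapx δ‖ ^ 2 / α δ) (nhdsWithin 0 (Set.Ioi 0)) (nhds 0))
    (δk : ℕ → ℝ) (hδpos : ∀ k, 0 < δk k) (hδ0 : Tendsto δk atTop (nhds 0))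
    (yd : ℕ → Y) (hyd : ∀ k, ‖yd k - y‖ ≤ δk k)
    (xk : ℕ → X)
    (hxk : ∀ k, xk k ∈ Xm (mft (δk k)) ∧ ∀ z ∈ Xm (mft (δk k)),
        ‖F (xk k) - yd k‖ ^ 2 + α (δk k) * ‖xk k - xs‖ ^ 2 ≤
          ‖F z - yd k‖ ^ 2 + α (δk k) * ‖z - xs‖ ^ 2) :
    ∃ φ : ℕ → ℕ, StrictMono φ ∧ Tendsto (xk ∘ φ) atTop (nhds xdag) := by
  classical
  set l := nhdsWithin (0:ℝ) (Set.Ioi 0) with hl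
  have hmemIoi : ∀ᶠ δ in l, δ ∈ Set.Ioi (0:ℝ) := self_mem_nhdsWithin
  -- xapx tends to xdag (in norm)
  have he2 : Tendsto (fun δ => ‖xdag - xapx δ‖ ^ 2) l (nhds 0) := by
    have : ∀ᶠ δ in l, ‖xdag - xapx δ‖ ^ 2 = (‖xdag - xapx δ‖ ^ 2 / α δ) * α δ := by
      filter_upwards [hmemIoi] with δ hδ
      field_simp [ne_of_gt (hαpos δ hδ)]
    exact Tendsto.congr' (this.mono fun δ h => h.symm) (by simpa using hapx0.mul hα1)
  have he : Tendsto (fun δ => ‖xdag - xapx δ‖) l (nhds 0) :=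
    norm_tendsto_of_sq (fun δ => norm_nonneg _) he2
  have hxapx : Tendsto xapx l (nhds xdag) := by
    rw [tendsto_iff_dist_tendsto_zero]
    exact he.congr (fun δ => by rw [dist_eq_norm, ← norm_sub_rev])
  have hxapxD : Tendsto xapx l (nhdsWithin xdag D) := by
    rw [tendsto_nhdsWithin_iff]
    refine ⟨hxapx, ?_⟩
    filter_upwards [hmemIoi] with δ hδ
    exact ((hXsub _) (hapx δ hδ)).2
  -- derivative remainder
  set r : ℝ → ℝ := fun δ =>
    ‖xapx δ - xdag‖⁻¹ * ‖F (xapx δ) - F xdag - (Fd xdag) (xapx δ - xdag)‖ with hrdef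
  have hr0 : Tendsto r l (nhds 0) := by
    have hd := (hasFDerivWithinAt_iff_tendsto.1 (hFd xdag hdag.1.2))
    exact hd.comp hxapxD
  have hrnn : ∀ δ, 0 ≤ r δ := fun δ =>
    mul_nonneg (inv_nonneg.2 (norm_nonneg _)) (norm_nonneg _)
  have hFxdag : F xdag = y := hdag.2.1
  have hη : ∀ δ > (0:ℝ), ‖F (xapx δ) - y‖ ≤ (‖Fd xdag‖ + r δ) * ‖xapx δ - xdag‖ := by
    intro δ hδ
    by_cases hz : ‖xapx δ - xdag‖ = 0
    · have : xapx δ = xdag := by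
        rwa [norm_sub_eq_zero_iff] at hz
      simp [this, hFxdag, hz]
    · have hz' : 0 < ‖xapx δ - xdag‖ := lt_of_le_of_ne (norm_nonneg _) (Ne.symm hz)
      have e1 : ‖F (xapx δ) - y - (Fd xdag) (xapx δ - xdag)‖ = r δ * ‖xapx δ - xdag‖ := by
        rw [hrdef, ← hFxdag]
        dsimp only
        rw [inv_mul_eq_div, div_mul_cancel₀ _ hz]
      calc ‖F (xapx δ) - y‖
          ≤ ‖F (xapx δ) - y - (Fd xdag) (xapx δ - xdag)‖ + ‖(Fd xdag) (xapx δ - xdag)‖ := by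
            simpa using norm_add_le (F (xapx δ) - y - (Fd xdag) (xapx δ - xdag)) ((Fd xdag) (xapx δ - xdag))
        _ ≤ r δ * ‖xapx δ - xdag‖ + ‖Fd xdag‖ * ‖xapx δ - xdag‖ := by
            rw [e1]
            exact add_le_add le_rfl ((Fd xdag).le_opNorm _)
        _ = (‖Fd xdag‖ + r δ) * ‖xapx δ - xdag‖ := by ring
  -- η² / α tends to 0
  have hη2α : Tendsto (fun δ => ‖F (xapx δ) - y‖ ^ 2 / α δ) l (nhds 0) := by
    have hg : Tendsto (fun δ => (‖Fd xdag‖ + r δ) ^ 2 * (‖xdag - xapx δ‖ ^ 2 / α δ)) l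
        (nhds 0) := by
      have := (((tendsto_const_nhds (x := ‖Fd xdag‖) (f := l)).add hr0).pow 2).mul hapx0
      simpa using this
    refine squeeze_zero' ?_ ?_ hg
    · filter_upwards [hmemIoi] with δ hδ
      exact div_nonneg (sq_nonneg _) (le_of_lt (hαpos δ hδ))
    · filter_upwards [hmemIoi] with δ hδ
      have h1 : ‖F (xapx δ) - y‖ ^ 2 ≤ ((‖Fd xdag‖ + r δ) * ‖xapx δ - xdag‖) ^ 2 := by
        have := hη δ hδ
        nlinarith [norm_nonneg (F (xapx δ) - y)]
      have h2 : ((‖Fd xdag‖ + r δ) * ‖xapx δ - xdag‖) ^ 2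
          = (‖Fd xdag‖ + r δ) ^ 2 * ‖xdag - xapx δ‖ ^ 2 := by
        rw [mul_pow, norm_sub_rev]

      calc ‖F (xapx δ) - y‖ ^ 2 / α δ
          ≤ ((‖Fd xdag‖ + r δ) * ‖xapx δ - xdag‖) ^ 2 / α δ :=
            (div_le_div_iff_of_pos_right (hαpos δ hδ)).2 h1
        _ = (‖Fd xdag‖ + r δ) ^ 2 * (‖xdag - xapx δ‖ ^ 2 / α δ) := by
            rw [h2, mul_div_assoc]
  have hη0 : Tendsto (fun δ => ‖F (xapx δ) - y‖) l (nhds 0) := by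
    have hg : Tendsto (fun δ => (‖Fd xdag‖ + r δ) * ‖xapx δ - xdag‖) l (nhds 0) := by
      have he' : Tendsto (fun δ => ‖xapx δ - xdag‖) l (nhds 0) :=
        he.congr (fun δ => by rw [norm_sub_rev])
      have := ((tendsto_const_nhds (x := ‖Fd xdag‖) (f := l)).add hr0).mul he'
      simpa using this
    refine squeeze_zero' (Filter.Eventually.of_forall fun δ => norm_nonneg _) ?_ hg
    filter_upwards [hmemIoi] with δ hδ
    exact hη δ hδ
  have hsn : Tendsto (fun δ => ‖xapx δ - xs‖) l (nhds ‖xdag - xs‖) :=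
    (hxapx.sub_const xs).norm
  -- pass to the sequence
  have hδl : Tendsto δk atTop l :=
    tendsto_nhdsWithin_of_tendsto_nhds_of_eventually_within _ hδ0
      (Filter.Eventually.of_forall fun k => hδpos k)
  set η : ℕ → ℝ := fun k => ‖F (xapx (δk k)) - y‖ with hηdef
  set a : ℕ → ℝ := fun k => α (δk k) with hadef
  set sseq : ℕ → ℝ := fun k => ‖xapx (δk k) - xs‖ with hsdef
  have hapos : ∀ k, 0 < a k := fun k => hαpos _ (hδpos k)
  have hηseq : Tendsto η atTop (nhds 0) := hη0.comp hδl
  have haseq : Tendsto a atTop (nhds 0) := hα1.comp hδl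
  have hsseq : Tendsto sseq atTop (nhds ‖xdag - xs‖) := hsn.comp hδl
  have hη2seq : Tendsto (fun k => η k ^ 2 / a k) atTop (nhds 0) := hη2α.comp hδl
  have hδ2seq : Tendsto (fun k => δk k ^ 2 / a k) atTop (nhds 0) := hα2.comp hδl
  have hmain : ∀ k, ‖F (xk k) - yd k‖ ^ 2 + a k * ‖xk k - xs‖ ^ 2
      ≤ (η k + δk k) ^ 2 + a k * sseq k ^ 2 := by
    intro k
    have h1 := (hxk k).2 (xapx (δk k)) (hapx _ (hδpos k))
    have h2 : ‖F (xapx (δk k)) - yd k‖ ≤ η k + δk k := by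
      calc ‖F (xapx (δk k)) - yd k‖
          = ‖(F (xapx (δk k)) - y) - (yd k - y)‖ := by rw [sub_sub_sub_cancel_right]
        _ ≤ ‖F (xapx (δk k)) - y‖ + ‖yd k - y‖ := norm_sub_le _ _
        _ ≤ η k + δk k := by
            exact add_le_add le_rfl (hyd k)
    have h3 : ‖F (xapx (δk k)) - yd k‖ ^ 2 ≤ (η k + δk k) ^ 2 := by
      nlinarith [norm_nonneg (F (xapx (δk k)) - yd k)]
    calc ‖F (xk k) - yd k‖ ^ 2 + a k * ‖xk k - xs‖ ^ 2
        ≤ ‖F (xapx (δk k)) - yd k‖ ^ 2 + a k * sseq k ^ 2 := h1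
      _ ≤ (η k + δk k) ^ 2 + a k * sseq k ^ 2 := by linarith
  -- residuals tend to zero
  have hTlim : Tendsto (fun k => (η k + δk k) ^ 2 + a k * sseq k ^ 2) atTop (nhds 0) := by
    have := ((hηseq.add hδ0).pow 2).add (haseq.mul (hsseq.pow 2))
    simpa using this
  have hAsq : Tendsto (fun k => ‖F (xk k) - yd k‖ ^ 2) atTop (nhds 0) := by
    refine squeeze_zero (fun k => sq_nonneg _) (fun k => ?_) hTlim
    have := hmain k
    nlinarith [mul_nonneg (hapos k).le (sq_nonneg ‖xk k - xs‖)]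
  have hFyd : Tendsto (fun k => ‖F (xk k) - yd k‖) atTop (nhds 0) :=
    norm_tendsto_of_sq (fun k => norm_nonneg _) hAsq
  have hFy : Tendsto (fun k => ‖F (xk k) - y‖) atTop (nhds 0) := by
    refine squeeze_zero (fun k => norm_nonneg _) (fun k => ?_) (by simpa using hFyd.add hδ0)
    calc ‖F (xk k) - y‖ = ‖(F (xk k) - yd k) + (yd k - y)‖ := by abel_nf
      _ ≤ ‖F (xk k) - yd k‖ + ‖yd k - y‖ := norm_add_le _ _
      _ ≤ ‖F (xk k) - yd k‖ + δk k := add_le_add le_rfl (hyd k)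
  -- the bound on the norms
  set u : ℕ → ℝ := fun k => (η k + δk k) ^ 2 / a k + sseq k ^ 2 with hudef
  have hule : ∀ k, ‖xk k - xs‖ ^ 2 ≤ u k := by
    intro k
    have h1 : a k * ‖xk k - xs‖ ^ 2 ≤ (η k + δk k) ^ 2 + a k * sseq k ^ 2 := by
      nlinarith [hmain k, sq_nonneg ‖F (xk k) - yd k‖]
    have h2 : a k * u k = (η k + δk k) ^ 2 + a k * sseq k ^ 2 := by
      rw [hudef]
      dsimp only
      rw [mul_add, mul_div_cancel₀ _ (ne_of_gt (hapos k))]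
    exact le_of_mul_le_mul_left (by rw [h2]; exact h1) (hapos k)
  have hu : Tendsto u atTop (nhds (‖xdag - xs‖ ^ 2)) := by
    have hpart1 : Tendsto (fun k => (η k + δk k) ^ 2 / a k) atTop (nhds 0) := by
      have hg : Tendsto (fun k => 2 * (η k ^ 2 / a k) + 2 * (δk k ^ 2 / a k)) atTop (nhds 0) := by
        have := (hη2seq.const_mul 2).add (hδ2seq.const_mul 2)
        simpa using this
      refine squeeze_zero (fun k => div_nonneg (sq_nonneg _) (hapos k).le) (fun k => ?_) hg
      have h1 : (η k + δk k) ^ 2 ≤ 2 * η k ^ 2 + 2 * δk k ^ 2 := by nlinarith [sq_nonneg (η k - δk k)]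
      calc (η k + δk k) ^ 2 / a k ≤ (2 * η k ^ 2 + 2 * δk k ^ 2) / a k :=
            (div_le_div_iff_of_pos_right (hapos k)).2 h1
        _ = 2 * (η k ^ 2 / a k) + 2 * (δk k ^ 2 / a k) := by ring
    have := hpart1.add (hsseq.pow 2)
    simpa using this
  -- boundedness of the sequence
  obtain ⟨M, hM⟩ := hu.bddAbove_range
  have hMr : ∀ k, u k ≤ M := fun k => hM (Set.mem_range_self k)
  have hRx : ∀ k, ‖xk k‖ ≤ Real.sqrt M + ‖xs‖ := by
    intro k
    have h1 : ‖xk k - xs‖ ≤ Real.sqrt M := Real.le_sqrt_of_sq_le ((hule k).trans (hMr k))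
    calc ‖xk k‖ = ‖(xk k - xs) + xs‖ := by rw [sub_add_cancel]
      _ ≤ ‖xk k - xs‖ + ‖xs‖ := norm_add_le _ _
      _ ≤ Real.sqrt M + ‖xs‖ := add_le_add h1 le_rfl
  -- extract a weakly convergent subsequence
  obtain ⟨φ, lw, hφ, hwc⟩ := weak_seq_compact xk (Real.sqrt M + ‖xs‖) hRx
  have hφat : Tendsto φ atTop atTop := hφ.tendsto_atTop
  have hmemCD : ∀ k, xk k ∈ C ∩ D := fun k => hXsub _ (hxk k).1
  have hwFy : WeaklyConv (fun n => F (xk (φ n))) y :=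
    strong_to_weak (hFy.comp hφat)
  have hwc' : WeaklyConv (fun n => xk (φ n)) lw := hwc
  have hlC : lw ∈ C := hC _ _ (fun n => (hmemCD (φ n)).1) hwc'
  obtain ⟨hlD, hFl⟩ := hF (fun n => xk (φ n)) lw y (fun n => (hmemCD (φ n)).2) hwc' hwFy
  -- inner products against fixed vectors
  have hts : ∀ b : X, Tendsto (fun n => (inner ℝ (xk (φ n) - xs) b : ℝ)) atTop
      (nhds (inner ℝ (lw - xs) b)) := by
    intro b
    have h1 := hwc' b
    have := h1.sub (tendsto_const_nhds (x := (inner ℝ xs b : ℝ)))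
    simpa [inner_sub_left] using this
  have hxknorm : ∀ n, ‖xk (φ n) - xs‖ ≤ Real.sqrt (u (φ n)) :=
    fun n => Real.le_sqrt_of_sq_le (hule (φ n))
  have sqrtu : Tendsto (fun n => Real.sqrt (u (φ n))) atTop (nhds ‖xdag - xs‖) := by
    have h1 : Tendsto (fun n => Real.sqrt (u (φ n))) atTop (nhds (Real.sqrt (‖xdag - xs‖ ^ 2))) :=
      (Real.continuous_sqrt.tendsto _).comp (hu.comp hφat)
    rwa [Real.sqrt_sq (norm_nonneg _)] at h1
  -- the weak limit is a minimum norm solution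
  have hlle : ‖lw - xs‖ ≤ ‖xdag - xs‖ := by
    have hle : (inner ℝ (lw - xs) (lw - xs) : ℝ) ≤ ‖xdag - xs‖ * ‖lw - xs‖ := by
      refine le_of_tendsto_of_tendsto' (hts (lw - xs)) (sqrtu.mul_const ‖lw - xs‖) (fun n => ?_)
      exact (real_inner_le_norm _ _).trans
        (mul_le_mul_of_nonneg_right (hxknorm n) (norm_nonneg _))
    rw [real_inner_self_eq_norm_mul_norm] at hle
    rcases (norm_nonneg (lw - xs)).eq_or_lt with h | h
    · rw [← h]; exact norm_nonneg _
    · exact le_of_mul_le_mul_right hle h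
  have hlsol : MinNormSol F D C y xs lw :=
    ⟨⟨hlC, hlD⟩, hFl, fun z hz hFz => hlle.trans (hdag.2.2 z hz hFz)⟩
  have hlw : lw = xdag := huniq _ hlsol
  subst hlw
  -- strong convergence of the subsequence
  refine ⟨φ, hφ, ?_⟩
  have hsq : ∀ n, ‖xk (φ n) - lw‖ ^ 2
      ≤ u (φ n) - 2 * (inner ℝ (xk (φ n) - xs) (lw - xs) : ℝ) + ‖lw - xs‖ ^ 2 := by
    intro n
    have h1 : ‖(xk (φ n) - xs) - (lw - xs)‖ ^ 2 = ‖xk (φ n) - xs‖ ^ 2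
        - 2 * (inner ℝ (xk (φ n) - xs) (lw - xs) : ℝ) + ‖lw - xs‖ ^ 2 :=
      norm_sub_sq_real _ _
    rw [sub_sub_sub_cancel_right] at h1
    rw [h1]
    have := hule (φ n)
    linarith
  have h9 : Tendsto (fun n => u (φ n) - 2 * (inner ℝ (xk (φ n) - xs) (lw - xs) : ℝ)
      + ‖lw - xs‖ ^ 2) atTop (nhds 0) := by
    have h1 := ((hu.comp hφat).sub ((hts (lw - xs)).const_mul 2)).add_const (‖lw - xs‖ ^ 2)
    have h2 : (inner ℝ (lw - xs) (lw - xs) : ℝ) = ‖lw - xs‖ ^ 2 := real_inner_self_eq_norm_sq _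
    rw [h2] at h1
    have h3 : ‖lw - xs‖ ^ 2 - 2 * ‖lw - xs‖ ^ 2 + ‖lw - xs‖ ^ 2 = (0:ℝ) := by ring
    rwa [h3] at h1
  have hnsq : Tendsto (fun n => ‖xk (φ n) - lw‖ ^ 2) atTop (nhds 0) :=
    squeeze_zero (fun n => sq_nonneg _) hsq h9
  have hn : Tendsto (fun n => ‖xk (φ n) - lw‖) atTop (nhds 0) :=
    norm_tendsto_of_sq (fun n => norm_nonneg _) hnsq
  rw [tendsto_iff_dist_tendsto_zero]
  exact hn.congr (fun n => by rw [dist_eq_norm]; rfl)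

/-- If the `x*`-minimum norm solution is unique, then the whole family of regularized
solutions converges strongly to it under the parameter choice rules. -/
theorem tikhonov_compact_sets_full_convergence_of_unique
    {X Y : Type*} [NormedAddCommGroup X] [InnerProductSpace ℝ X] [CompleteSpace X]
    [NormedAddCommGroup Y] [InnerProductSpace ℝ Y] [CompleteSpace Y]
    (F : X → Y) (D C : Set X) (y : Y) (xs : X)
    (hFc : ContinuousOn F D) (hF : WeaklyClosedMap F D) (hC : WeaklySeqClosed C)
    (Fd : X → X →L[ℝ] Y) (hFd : ∀ z ∈ D, HasFDerivWithinAt F (Fd z) D z)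
    (xdag : X) (hdag : MinNormSol F D C y xs xdag)
    (huniq : ∀ u, MinNormSol F D C y xs u → u = xdag)
    (Xm : ℕ → Set X) (hXc : ∀ m, IsCompact (Xm m)) (hXsub : ∀ m, Xm m ⊆ C ∩ D)
    (hXdense : C ∩ D ⊆ closure (⋃ m, Xm m))
    (α : ℝ → ℝ) (hαpos : ∀ δ > (0:ℝ), 0 < α δ)
    (hα1 : Tendsto α (nhdsWithin 0 (Set.Ioi 0)) (nhds 0))
    (hα2 : Tendsto (fun δ => δ ^ 2 / α δ) (nhdsWithin 0 (Set.Ioi 0)) (nhds 0))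
    (mft : ℝ → ℕ) (hm : Tendsto mft (nhdsWithin 0 (Set.Ioi 0)) atTop)
    (xapx : ℝ → X) (hapx : ∀ δ > (0:ℝ), xapx δ ∈ Xm (mft δ))
    (hapx0 : Tendsto (fun δ => ‖xdag - xapx δ‖ ^ 2 / α δ) (nhdsWithin 0 (Set.Ioi 0)) (nhds 0)) :
    ∀ (δk : ℕ → ℝ), (∀ k, 0 < δk k) → Tendsto δk atTop (nhds 0) →
    ∀ (yd : ℕ → Y), (∀ k, ‖yd k - y‖ ≤ δk k) →
    ∀ (xk : ℕ → X),
      (∀ k, xk k ∈ Xm (mft (δk k)) ∧ ∀ z ∈ Xm (mft (δk k)),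
        ‖F (xk k) - yd k‖ ^ 2 + α (δk k) * ‖xk k - xs‖ ^ 2 ≤
          ‖F z - yd k‖ ^ 2 + α (δk k) * ‖z - xs‖ ^ 2) →
      Tendsto xk atTop (nhds xdag) := by
  intro δk hδpos hδ0 yd hyd xk hxk
  refine tendsto_of_subseq_tendsto fun ns hns => ?_
  obtain ⟨φ, hφ, ht⟩ := tikhonov_subseq F D C y xs hF hC Fd hFd xdag hdag huniq Xm hXsub
    α hαpos hα1 hα2 mft xapx hapx hapx0 (δk ∘ ns) (fun k => hδpos _) (hδ0.comp hns)
    (yd ∘ ns) (fun k => hyd _) (xk ∘ ns) (fun k => hxk _)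
  exact ⟨φ, ht⟩
end

section
/- In the linear case, for x_{m,α}^δ minimizing ‖Az − y^δ‖² + α‖z‖² over X_m, with x† = A*w and x_m ∈ X_m, the following explicit bound holds: (‖Ax_{m,α}^δ − y^δ‖ − α‖w‖)² + α‖x_{m,α}^δ − x†‖² ≤ (δ + α‖w‖)² + ‖A‖²‖ξ_m‖² + 2δ‖A‖‖ξ_m‖ + α‖ξ_m‖² + 2α‖ξ_m‖‖x†‖, where ξ_m = x_m − x†. -/
/-- Explicit bound in the linear case: for a Tikhonov minimizer `x` over `Xm`,
any `xm ∈ Xm`, source element `w` with `A* w = x†`, exact data `y = A x†` and noisy data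
`yδ` with `‖yδ − y‖ ≤ δ`, one has
`(‖A x − yδ‖ − α‖w‖)² + α‖x − x†‖² ≤ (δ + α‖w‖)² + ‖A‖²‖ξ‖² + 2δ‖A‖‖ξ‖ + α‖ξ‖² + 2α‖ξ‖‖x†‖`
where `ξ = xm − x†`. -/
theorem tikhonov_linear_explicit_bound
    {X Y : Type*} [NormedAddCommGroup X] [InnerProductSpace ℝ X] [CompleteSpace X]
    [NormedAddCommGroup Y] [InnerProductSpace ℝ Y] [CompleteSpace Y]
    (A : X →L[ℝ] Y) (xdag : X) (w : Y)
    (hw : (ContinuousLinearMap.adjoint A) w = xdag)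
    (yδ : Y) (δ : ℝ) (hδ : 0 ≤ δ) (hnoise : ‖yδ - A xdag‖ ≤ δ)
    (α : ℝ) (hα : 0 < α)
    (Xm : Set X) (xm : X) (hxm : xm ∈ Xm)
    (x : X) (hxmem : x ∈ Xm)
    (hxmin : ∀ z ∈ Xm, ‖A x - yδ‖ ^ 2 + α * ‖x‖ ^ 2 ≤ ‖A z - yδ‖ ^ 2 + α * ‖z‖ ^ 2) :
    (‖A x - yδ‖ - α * ‖w‖) ^ 2 + α * ‖x - xdag‖ ^ 2 ≤
      (δ + α * ‖w‖) ^ 2 + ‖A‖ ^ 2 * ‖xm - xdag‖ ^ 2 + 2 * δ * ‖A‖ * ‖xm - xdag‖ +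
        α * ‖xm - xdag‖ ^ 2 + 2 * α * ‖xm - xdag‖ * ‖xdag‖ := by
  have hmin := hxmin xm hxm
  have hξn : (0:ℝ) ≤ ‖xm - xdag‖ := norm_nonneg _
  have hAn : (0:ℝ) ≤ ‖A‖ := norm_nonneg _
  have hwn : (0:ℝ) ≤ ‖w‖ := norm_nonneg _
  -- bound on ‖A xm - yδ‖
  have hAxm : ‖A xm - yδ‖ ≤ ‖A‖ * ‖xm - xdag‖ + δ := by
    have h1 : A xm - yδ = A (xm - xdag) - (yδ - A xdag) := by
      rw [map_sub]; abel
    rw [h1]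
    calc ‖A (xm - xdag) - (yδ - A xdag)‖
        ≤ ‖A (xm - xdag)‖ + ‖yδ - A xdag‖ := norm_sub_le _ _
      _ ≤ ‖A‖ * ‖xm - xdag‖ + δ := add_le_add (A.le_opNorm _) hnoise
  have hAxm2 : ‖A xm - yδ‖ ^ 2 ≤ (‖A‖ * ‖xm - xdag‖ + δ) ^ 2 := by
    have := norm_nonneg (A xm - yδ)
    nlinarith
  -- bound on ‖xm‖²
  have hxmsq : ‖xm‖ ^ 2 ≤ ‖xm - xdag‖ ^ 2 + 2 * ‖xm - xdag‖ * ‖xdag‖ + ‖xdag‖ ^ 2 := by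
    have h1 : xm = (xm - xdag) + xdag := by abel
    have h2 := norm_add_sq_real (xm - xdag) xdag
    have h3 := real_inner_le_norm (xm - xdag) xdag
    nth_rewrite 1 [h1]
    nlinarith
  -- expand ‖x‖²
  have hxsq : ‖x‖ ^ 2 = ‖x - xdag‖ ^ 2 + 2 * inner ℝ (x - xdag) xdag + ‖xdag‖ ^ 2 := by
    have h1 : x = (x - xdag) + xdag := by abel
    nth_rewrite 1 [h1]
    rw [norm_add_sq_real]
  -- inner product bound via the source condition
  have hinner : -(‖A x - yδ‖ * ‖w‖) - δ * ‖w‖ ≤ (inner ℝ (x - xdag) xdag : ℝ) := by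
    have h1 : (inner ℝ (x - xdag) xdag : ℝ) = inner ℝ (A (x - xdag)) w := by
      rw [← hw, ContinuousLinearMap.adjoint_inner_right]
    have h2 : A (x - xdag) = (A x - yδ) + (yδ - A xdag) := by
      rw [map_sub]; abel
    rw [h1, h2, inner_add_left]
    have h3 : |(inner ℝ (A x - yδ) w : ℝ)| ≤ ‖A x - yδ‖ * ‖w‖ :=
      abs_real_inner_le_norm _ _
    have h4 : |(inner ℝ (yδ - A xdag) w : ℝ)| ≤ ‖yδ - A xdag‖ * ‖w‖ :=
      abs_real_inner_le_norm _ _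
    have h5 : ‖yδ - A xdag‖ * ‖w‖ ≤ δ * ‖w‖ := by
      exact mul_le_mul_of_nonneg_right hnoise hwn
    have h6 := abs_le.mp h3
    have h7 := abs_le.mp h4
    linarith [h6.1, h7.1]
  nlinarith [sq_nonneg (‖A x - yδ‖ - α * ‖w‖), norm_nonneg (A x - yδ),
    mul_le_mul_of_nonneg_left hinner (le_of_lt hα),
    mul_le_mul_of_nonneg_left hxmsq (le_of_lt hα),
    mul_le_mul_of_nonneg_left hxsq.le (le_of_lt hα)]
end
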